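/- Let P, X, Y be strings and let A = P·X and B = P·Y (concatenation). Then the set of minimal common supersequences of A and B equals { P·Z : Z is a minimal common supersequence of X and Y }. -/

import Mathlib

/-- `C` is a common supersequence of `A` and `B`. -/
def IsCommonSupseq {α : Type*} (A B C : List α) : Prop :=
  A.Sublist C ∧ B.Sublist C

/-- `C` is a minimal common supersequence of `A` and `B`. -/
def IsMinimalCommonSupseq {α : Type*} (A B C : List α) : Prop :=
  IsCommonSupseq A B C ∧ ∀ C', C'.Sublist C → C' ≠ C → ¬ IsCommonSupseq A B C'

private lemma key_extract {α : Type*} :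
    ∀ (S P X Y : List α), (P ++ X).Sublist S → (P ++ Y).Sublist S →
      ∃ Z, X.Sublist Z ∧ Y.Sublist Z ∧ (P ++ Z).Sublist S := by
  intro S
  induction S with
  | nil =>
    intro P X Y hA hB
    have h1 := List.sublist_nil.mp hA
    have h2 := List.sublist_nil.mp hB
    rcases List.append_eq_nil_iff.mp h1 with ⟨hP, hX⟩
    rcases List.append_eq_nil_iff.mp h2 with ⟨-, hY⟩
    exact ⟨[], by simp [hX], by simp [hY], by simp [hP]⟩
  | cons s S' ih =>
    intro P X Y hA hB
    cases P with
    | nil =>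
      exact ⟨s :: S', hA, hB, by simp⟩
    | cons p P' =>
      simp only [List.cons_append] at hA hB
      cases hA with
      | cons _ hA' =>
        cases hB with
        | cons _ hB' =>
          obtain ⟨Z, hXZ, hYZ, hPZ⟩ := ih (p :: P') X Y hA' hB'
          exact ⟨Z, hXZ, hYZ, hPZ.cons s⟩
        | cons_cons _ hB' =>
          have hA'' : (P' ++ X).Sublist S' :=
            (List.sublist_cons_self s _).trans hA'
          obtain ⟨Z, hXZ, hYZ, hPZ⟩ := ih P' X Y hA'' hB'
          exact ⟨Z, hXZ, hYZ, by simpa using hPZ.cons₂ s⟩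
      | cons_cons _ hA' =>
        cases hB with
        | cons _ hB' =>
          have hB'' : (P' ++ Y).Sublist S' :=
            (List.sublist_cons_self s _).trans hB'
          obtain ⟨Z, hXZ, hYZ, hPZ⟩ := ih P' X Y hA' hB''
          exact ⟨Z, hXZ, hYZ, by simpa using hPZ.cons₂ s⟩
        | cons_cons _ hB' =>
          obtain ⟨Z, hXZ, hYZ, hPZ⟩ := ih P' X Y hA' hB'
          exact ⟨Z, hXZ, hYZ, by simpa using hPZ.cons₂ s⟩

/-- If `A = P·X` and `B = P·Y`, then the minimal common supersequences of
`A` and `B` are exactly the strings `P·Z` where `Z` is a minimal common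
supersequence of `X` and `Y`. -/
theorem stmt_8 {α : Type*} (P X Y : List α) :
    {S | IsMinimalCommonSupseq (P ++ X) (P ++ Y) S} =
      (fun Z => P ++ Z) '' {Z | IsMinimalCommonSupseq X Y Z} := by
  ext S
  simp only [Set.mem_setOf_eq, Set.mem_image]
  constructor
  · rintro ⟨⟨hAS, hBS⟩, hmin⟩
    obtain ⟨Z, hXZ, hYZ, hPZ⟩ := key_extract S P X Y hAS hBS
    have hcs : IsCommonSupseq (P ++ X) (P ++ Y) (P ++ Z) :=
      ⟨(List.append_sublist_append_left P).mpr hXZ,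
       (List.append_sublist_append_left P).mpr hYZ⟩
    have hSeq : P ++ Z = S := by
      by_contra hne
      exact hmin (P ++ Z) hPZ hne hcs
    refine ⟨Z, ⟨⟨hXZ, hYZ⟩, ?_⟩, hSeq⟩
    intro Z' hZ' hne ⟨hXZ', hYZ'⟩
    have h1 : (P ++ Z').Sublist S := hSeq ▸ (List.append_sublist_append_left P).mpr hZ'
    have h2 : P ++ Z' ≠ S := by
      rw [← hSeq]
      intro h
      exact hne (List.append_cancel_left h)
    exact hmin (P ++ Z') h1 h2
      ⟨(List.append_sublist_append_left P).mpr hXZ',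
       (List.append_sublist_append_left P).mpr hYZ'⟩
  · rintro ⟨Z, ⟨⟨hXZ, hYZ⟩, hmin⟩, rfl⟩
    refine ⟨⟨(List.append_sublist_append_left P).mpr hXZ,
      (List.append_sublist_append_left P).mpr hYZ⟩, ?_⟩
    intro C' hC' hne ⟨hA', hB'⟩
    obtain ⟨W, hXW, hYW, hPW⟩ := key_extract C' P X Y hA' hB'
    have hWZ : W.Sublist Z :=
      (List.append_sublist_append_left P).mp (hPW.trans hC')
    have hWeq : W = Z := by
      by_contra hwne
      exact hmin W hWZ hwne ⟨hXW, hYW⟩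
    subst hWeq
    exact hne (hC'.antisymm hPW)
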